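/- For the extreme-tilt scalar-field system (v = ε ∈ {-1,+1}) given in equations (scalar-field-C), the curve of points Q(Σ₀) = (Σ, A, u, w) = (Σ₀, 0, ε√(1 - C₂Σ₀²), 0), defined for C₂Σ₀² ≤ 1, consists of equilibria, and the Jacobian at Q(Σ₀) has eigenvalue 0 with eigenvector parallel to the tangent vector (1, 0, -εC₂Σ₀/√(1-C₂Σ₀²), 0) of the curve (for C₂Σ₀² < 1, Σ₀ ≠ 0); hence the curve is normally hyperbolic at such points. -/

import Mathlib

noncomputable section

/-- Extreme-tilt scalar-field system (v = ε ∈ {±1}) in `(Σ, A, u, w)`, with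
parameters `C₂`, `lam` (= λ) and `ε`. -/
def Fets (C₂ lam ε : ℝ) : ℝ × ℝ × ℝ × ℝ → ℝ × ℝ × ℝ × ℝ := fun p =>
  let S := p.1; let A := p.2.1; let u := p.2.2.1; let w := p.2.2.2
  ((C₂ * S * (2 * C₂ * (S ^ 2 - A ^ 2) - A * (A * lam ^ 2 + 4 * ε) +
      2 * u ^ 2 + 2 * w ^ 2 - 2) -
      2 * A * lam * (A * lam + Real.sqrt 2 * u * ε) + 2 * w ^ 2) / (2 * C₂),
   -(A ^ 3 * lam ^ 2) / 2 + A * C₂ * (S ^ 2 - A ^ 2) +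
     A * (2 * S + u ^ 2 + w ^ 2 + 1),
   C₂ * u * (S ^ 2 - A ^ 2) + u * (-(A ^ 2 * lam ^ 2) / 2 + w ^ 2 - 1) +
     Real.sqrt 2 * (A ^ 2 * lam ^ 2 - w ^ 2) / lam + u ^ 3,
   w * (C₂ * (S ^ 2 - A ^ 2) - A ^ 2 * lam ^ 2 / 2 + S + u ^ 2 -
     Real.sqrt 2 * u / lam + w ^ 2 + 1))

/-- The points `Q(Σ₀)` are equilibria. -/
lemma Fets_curve_eq_zero (C₂ lam ε : ℝ)
    (hε : ε = 1 ∨ ε = -1) (hC : 0 < C₂) :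
    (∀ S₀ : ℝ, C₂ * S₀ ^ 2 ≤ 1 →
      Fets C₂ lam ε (S₀, 0, ε * Real.sqrt (1 - C₂ * S₀ ^ 2), 0) = 0) := by
  intro S₀ h
  have hε2 : ε ^ 2 = 1 := by rcases hε with h | h <;> simp [h]
  have hu2 : (ε * Real.sqrt (1 - C₂ * S₀ ^ 2)) ^ 2 = 1 - C₂ * S₀ ^ 2 := by
    rw [mul_pow, Real.sq_sqrt (by linarith), hε2, one_mul]
  simp only [Fets, Prod.mk_eq_zero]
  refine ⟨?_, by ring, ?_, by ring⟩
  · field_simp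
    linear_combination (2 * C₂ * S₀) * hu2
  · linear_combination (ε * Real.sqrt (1 - C₂ * S₀ ^ 2)) * hu2

/-- The curve `Q(Σ₀) = (Σ₀, 0, ε√(1 - C₂Σ₀²), 0)` (for `C₂Σ₀² ≤ 1`) consists of
equilibria of the extreme-tilt scalar-field system, and (for `C₂Σ₀² < 1`,
`Σ₀ ≠ 0`) the Jacobian at `Q(Σ₀)` has eigenvalue `0` with eigenvector the tangent
vector `(1, 0, -εC₂Σ₀/√(1 - C₂Σ₀²), 0)` of the curve; hence the curve is normally
hyperbolic at such points. -/
theorem extreme_tilt_curve_normally_hyperbolic (C₂ lam ε : ℝ)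
    (hε : ε = 1 ∨ ε = -1) (hC : 0 < C₂) (hlam : 0 < lam) :
    (∀ S₀ : ℝ, C₂ * S₀ ^ 2 ≤ 1 →
      Fets C₂ lam ε (S₀, 0, ε * Real.sqrt (1 - C₂ * S₀ ^ 2), 0) = 0) ∧
    (∀ S₀ : ℝ, C₂ * S₀ ^ 2 < 1 → S₀ ≠ 0 →
      Module.End.HasEigenvector
        ((fderiv ℝ (Fets C₂ lam ε)
            (S₀, 0, ε * Real.sqrt (1 - C₂ * S₀ ^ 2), 0)).toLinearMap) 0
        (1, 0, -ε * C₂ * S₀ / Real.sqrt (1 - C₂ * S₀ ^ 2), 0)) := by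
  refine ⟨Fets_curve_eq_zero C₂ lam ε hε hC, ?_⟩
  intro S₀ h hS0
  set q : ℝ × ℝ × ℝ × ℝ := (S₀, 0, ε * Real.sqrt (1 - C₂ * S₀ ^ 2), 0) with hq
  have hpos : (0:ℝ) < 1 - C₂ * S₀ ^ 2 := by linarith
  have hsq : Real.sqrt (1 - C₂ * S₀ ^ 2) ≠ 0 := by positivity
  have hF : DifferentiableAt ℝ (Fets C₂ lam ε) q := by unfold Fets; fun_prop
  -- derivative of the curve
  have hinner : HasDerivAt (fun S : ℝ => 1 - C₂ * S ^ 2) (-(C₂ * (2 * S₀))) S₀ := by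
    have := ((hasDerivAt_pow 2 S₀).const_mul C₂).const_sub 1
    simpa using this
  have hsqrt : HasDerivAt (fun S : ℝ => Real.sqrt (1 - C₂ * S ^ 2))
      (1 / (2 * Real.sqrt (1 - C₂ * S₀ ^ 2)) * (-(C₂ * (2 * S₀)))) S₀ :=
    (Real.hasDerivAt_sqrt hpos.ne').comp S₀ hinner
  have hQ : HasDerivAt (fun S : ℝ => (S, (0:ℝ), ε * Real.sqrt (1 - C₂ * S ^ 2), (0:ℝ)))
      ((1:ℝ), (0:ℝ), -ε * C₂ * S₀ / Real.sqrt (1 - C₂ * S₀ ^ 2), (0:ℝ)) S₀ := by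
    have h3 : HasDerivAt (fun S : ℝ => ε * Real.sqrt (1 - C₂ * S ^ 2))
        (-ε * C₂ * S₀ / Real.sqrt (1 - C₂ * S₀ ^ 2)) S₀ := by
      have := hsqrt.const_mul ε
      refine this.congr_deriv ?_
      field_simp
    exact (hasDerivAt_id S₀).prodMk ((hasDerivAt_const S₀ (0:ℝ)).prodMk
      (h3.prodMk (hasDerivAt_const S₀ (0:ℝ))))
  have hcomp : HasDerivAt (fun S : ℝ => Fets C₂ lam ε (S, 0, ε * Real.sqrt (1 - C₂ * S ^ 2), 0))
      ((fderiv ℝ (Fets C₂ lam ε) q) (1, 0, -ε * C₂ * S₀ / Real.sqrt (1 - C₂ * S₀ ^ 2), 0)) S₀ :=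
    by have := hF.hasFDerivAt.comp_hasDerivAt S₀ hQ; exact this
  have heq : (fun S : ℝ => Fets C₂ lam ε (S, 0, ε * Real.sqrt (1 - C₂ * S ^ 2), 0))
      =ᶠ[nhds S₀] fun _ => 0 := by
    have hopen : IsOpen {S : ℝ | C₂ * S ^ 2 < 1} :=
      isOpen_lt (by fun_prop) continuous_const
    filter_upwards [hopen.mem_nhds h] with S hS
    exact Fets_curve_eq_zero C₂ lam ε hε hC S hS.le
  have hzero : HasDerivAt (fun S : ℝ => Fets C₂ lam ε (S, 0, ε * Real.sqrt (1 - C₂ * S ^ 2), 0))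
      0 S₀ := (hasDerivAt_const S₀ (0 : ℝ × ℝ × ℝ × ℝ)).congr_of_eventuallyEq heq
  have key : (fderiv ℝ (Fets C₂ lam ε) q)
      (1, 0, -ε * C₂ * S₀ / Real.sqrt (1 - C₂ * S₀ ^ 2), 0) = 0 :=
    hcomp.unique hzero
  refine ⟨Module.End.mem_eigenspace_iff.mpr ?_, ?_⟩
  · simpa using key
  · simp [Prod.ext_iff]
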